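/- Submodularity of the Soft QD Score: fix σ > 0 and a finite set Θ of solutions, each solution θ having quality f(θ) ≥ 0 and descriptor b(θ) ∈ ℝ^d. Define S(U) = ∫_{ℝ^d} max_{θ∈U} f(θ) exp(−‖b − b(θ)‖²/(2σ²)) db for nonempty finite U ⊆ Θ (and S(∅) = 0). Then for all U ⊆ V ⊆ Θ and any θ' ∉ V with quality f' ≥ 0 and descriptor b', S(U ∪ {θ'}) − S(U) ≥ S(V ∪ {θ'}) − S(V). -/

import Mathlib

open MeasureTheory Real Finset

lemma gauss_integrable (d : ℕ) (b : ℝ) (hb : 0 < b) (c : EuclideanSpace ℝ (Fin d)) :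
    Integrable (fun x : EuclideanSpace ℝ (Fin d) => Real.exp (-(b * ‖x - c‖ ^ 2))) := by
  have h0 := GaussianFourier.integrable_cexp_neg_mul_sq_norm_add (b := (b : ℂ))
    (V := EuclideanSpace ℝ (Fin d)) (by simpa using hb) 0 c
  have h1 : Integrable (fun x : EuclideanSpace ℝ (Fin d) => Real.exp (-(b * ‖x‖ ^ 2))) := by
    refine h0.norm.congr (Filter.Eventually.of_forall fun x => ?_)
    simp [Complex.norm_exp]
    exact Or.inl (by rw [← Complex.ofReal_pow, Complex.ofReal_re])
  exact h1.comp_sub_right c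

theorem softQD_submodular {ι : Type*} [DecidableEq ι] (d : ℕ) (σ : ℝ) (hσ : 0 < σ)
    (Θ : Finset ι) (f : ι → ℝ) (hf : ∀ θ, 0 ≤ f θ)
    (bb : ι → EuclideanSpace ℝ (Fin d))
    (S : Finset ι → ℝ)
    (hS : ∀ U : Finset ι, S U =
      if h : U.Nonempty then
        ∫ x : EuclideanSpace ℝ (Fin d),
          U.sup' h (fun θ => f θ * Real.exp (-‖x - bb θ‖ ^ 2 / (2 * σ ^ 2)))
      else 0)
    (U V : Finset ι) (hUV : U ⊆ V) (hVΘ : V ⊆ Θ)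
    (θ' : ι) (hθ' : θ' ∉ V) :
    S (insert θ' V) - S V ≤ S (insert θ' U) - S U := by
  set g : ι → EuclideanSpace ℝ (Fin d) → ℝ :=
    fun θ x => f θ * Real.exp (-‖x - bb θ‖ ^ 2 / (2 * σ ^ 2)) with hg
  have hgnonneg : ∀ θ x, 0 ≤ g θ x := fun θ x =>
    mul_nonneg (hf θ) (Real.exp_nonneg _)
  have hInt : ∀ θ, Integrable (g θ) := by
    intro θ
    have := (gauss_integrable d (1 / (2 * σ ^ 2)) (by positivity) (bb θ)).const_mul (f θ)
    refine this.congr (Filter.Eventually.of_forall fun x => ?_)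
    simp only [hg]
    congr 1
    congr 1
    field_simp
  have hIntSup : ∀ (W : Finset ι) (h : W.Nonempty),
      Integrable (fun x => W.sup' h (fun θ => g θ x)) := by
    intro W h
    induction h using Finset.Nonempty.cons_induction with
    | singleton a => simpa using hInt a
    | cons a s ha hs ih =>
        have : (fun x => (Finset.cons a s ha).sup' (Finset.cons_nonempty ha)
            (fun θ => g θ x)) = fun x => g a x ⊔ s.sup' hs (fun θ => g θ x) := by
          funext x
          simp only [Finset.cons_eq_insert]
          rw [Finset.sup'_insert (H := hs)]
        rw [this]
        exact (hInt a).sup ih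
  have hsupnonneg : ∀ (W : Finset ι) (h : W.Nonempty) x,
      0 ≤ W.sup' h (fun θ => g θ x) := by
    intro W h x
    obtain ⟨a, ha⟩ := h
    exact le_trans (hgnonneg a x) (Finset.le_sup' (fun θ => g θ x) ha)
  have hiU : (insert θ' U).Nonempty := insert_nonempty _ _
  have hiV : (insert θ' V).Nonempty := insert_nonempty _ _
  rcases U.eq_empty_or_nonempty with hUe | hUne
  · -- U = ∅
    subst hUe
    have hS0 : S ∅ = 0 := by rw [hS]; simp
    have hS1 : S (insert θ' ∅) = ∫ x, g θ' x := by
      rw [hS, dif_pos hiU]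
      simp [hg]
    rcases V.eq_empty_or_nonempty with hVe | hVne
    · subst hVe; exact le_refl _
    · rw [hS0, hS1, hS (insert θ' V), hS V, dif_pos hiV, dif_pos hVne, sub_zero,
        sub_le_iff_le_add, ← integral_add (hInt θ') (hIntSup V hVne)]
      refine integral_mono (hIntSup _ hiV) ((hInt θ').add (hIntSup V hVne)) fun x => ?_
      simp only
      rw [Finset.sup'_insert (H := hVne)]
      exact max_le (le_add_of_nonneg_right (hsupnonneg V hVne x))
        (le_add_of_nonneg_left (hgnonneg θ' x))
  · have hVne : V.Nonempty := hUne.mono hUV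
    rw [hS U, hS V, hS (insert θ' U), hS (insert θ' V),
      dif_pos hUne, dif_pos hVne, dif_pos hiU, dif_pos hiV]
    rw [← integral_sub (hIntSup _ hiV) (hIntSup V hVne),
      ← integral_sub (hIntSup _ hiU) (hIntSup U hUne)]
    refine integral_mono ((hIntSup _ hiV).sub (hIntSup V hVne))
      ((hIntSup _ hiU).sub (hIntSup U hUne)) fun x => ?_
    simp only
    rw [Finset.sup'_insert (H := hVne), Finset.sup'_insert (H := hUne)]
    have huv : U.sup' hUne (fun θ => g θ x) ≤ V.sup' hVne (fun θ => g θ x) :=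
      Finset.sup'_mono _ hUV hUne
    set a := g θ' x
    set u := U.sup' hUne (fun θ => g θ x)
    set v := V.sup' hVne (fun θ => g θ x)
    have h1 : a ⊔ v - v = max (a - v) 0 := by
      rw [← max_sub_sub_right a v v, sub_self]
    have h2 : a ⊔ u - u = max (a - u) 0 := by
      rw [← max_sub_sub_right a u u, sub_self]
    rw [h1, h2]
    exact max_le_max (by linarith) le_rfl
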